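/- For every real number λ with λ > 1, one has F(5/3, 1/3, 7/3; 1/λ) − (2/3)·(λ+1)·F(2/3, 1/3, 4/3; 1/λ) = −(2/3)·λ^{2/3}·(λ−1)^{1/3}. -/

import Mathlib

open scoped BigOperators

open Polynomial Finset

/-- The Gauss hypergeometric series `F(a,b,c;z)`. -/
noncomputable def hypF (a b c z : ℝ) : ℝ :=
  ∑' n : ℕ,
    (Polynomial.eval a (ascPochhammer ℝ n) * Polynomial.eval b (ascPochhammer ℝ n) /
      (Polynomial.eval c (ascPochhammer ℝ n) * (n.factorial : ℝ))) * z ^ n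

/-- coefficient of the first hypergeometric series -/
noncomputable def cA (n : ℕ) : ℝ :=
  Polynomial.eval (5 / 3 : ℝ) (ascPochhammer ℝ n) * Polynomial.eval (1 / 3 : ℝ) (ascPochhammer ℝ n) /
    (Polynomial.eval (7 / 3 : ℝ) (ascPochhammer ℝ n) * (n.factorial : ℝ))

/-- coefficient of the second hypergeometric series -/
noncomputable def cB (n : ℕ) : ℝ :=
  Polynomial.eval (2 / 3 : ℝ) (ascPochhammer ℝ n) * Polynomial.eval (1 / 3 : ℝ) (ascPochhammer ℝ n) /
    (Polynomial.eval (4 / 3 : ℝ) (ascPochhammer ℝ n) * (n.factorial : ℝ))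

/-- binomial-type coefficient -/
noncomputable def pc (a : ℝ) (n : ℕ) : ℝ := Polynomial.eval a (ascPochhammer ℝ n) / (n.factorial : ℝ)

lemma asc_shift (x : ℝ) (m : ℕ) :
    x * Polynomial.eval (x + 1) (ascPochhammer ℝ m)
      = Polynomial.eval x (ascPochhammer ℝ m) * (x + m) := by
  induction m with
  | zero => simp
  | succ m ih =>
    rw [ascPochhammer_succ_eval, ascPochhammer_succ_eval]
    push_cast
    linear_combination (x + 1 + (m : ℝ)) * ih

lemma asc_left (x : ℝ) (m : ℕ) :
    Polynomial.eval x (ascPochhammer ℝ (m + 1))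
      = x * Polynomial.eval (x + 1) (ascPochhammer ℝ m) := by
  rw [ascPochhammer_succ_left]
  simp [Polynomial.eval_comp]

lemma asc_mono {x y : ℝ} (hx : 0 < x) (hxy : x ≤ y) (n : ℕ) :
    Polynomial.eval x (ascPochhammer ℝ n) ≤ Polynomial.eval y (ascPochhammer ℝ n) := by
  induction n with
  | zero => simp
  | succ n ih =>
    rw [ascPochhammer_succ_eval, ascPochhammer_succ_eval]
    have hy : 0 < y := lt_of_lt_of_le hx hxy
    have h1 := ascPochhammer_pos n x hx
    have h2 := ascPochhammer_pos n y hy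
    have hxn : 0 ≤ x + n := by positivity
    have : x + n ≤ y + n := by linarith
    nlinarith

lemma asc_abs_le {a : ℝ} (ha : |a| ≤ 1) (n : ℕ) :
    |Polynomial.eval a (ascPochhammer ℝ n)| ≤ (n.factorial : ℝ) := by
  induction n with
  | zero => simp
  | succ n ih =>
    rw [ascPochhammer_succ_eval, abs_mul]
    have h1 : |a + n| ≤ 1 + n := by
      calc |a + n| ≤ |a| + |(n : ℝ)| := abs_add_le _ _
        _ ≤ 1 + n := by simp [abs_of_nonneg (Nat.cast_nonneg n : (0:ℝ) ≤ n)]; linarith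
    have h2 : ((n+1).factorial : ℝ) = (n.factorial : ℝ) * (1 + n) := by
      rw [Nat.factorial_succ]; push_cast; ring
    rw [h2]
    have hn : (0:ℝ) ≤ 1 + n := by positivity
    nlinarith [abs_nonneg (Polynomial.eval a (ascPochhammer ℝ n)),
      abs_nonneg (a + (n:ℝ)), (show (0:ℝ) < n.factorial from by exact_mod_cast n.factorial_pos)]

lemma summable_aux {u : ℕ → ℝ} {z : ℝ} (hz0 : 0 ≤ z) (hz1 : z < 1)
    (hu : ∀ n, |u n| ≤ 1) : Summable (fun n => u n * z ^ n) := by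
  apply Summable.of_norm_bounded (summable_geometric_of_lt_one hz0 hz1)
  intro n
  rw [Real.norm_eq_abs, abs_mul, abs_pow, abs_of_nonneg hz0]
  exact mul_le_of_le_one_left (pow_nonneg hz0 n) (hu n)

lemma pc_abs_le {a : ℝ} (ha : |a| ≤ 1) (n : ℕ) : |pc a n| ≤ 1 := by
  rw [pc, abs_div, abs_of_nonneg (Nat.cast_nonneg n.factorial : (0:ℝ) ≤ _)]
  rw [div_le_one (by exact_mod_cast n.factorial_pos)]
  exact asc_abs_le ha n

/-- Chu-Vandermonde for ascending Pochhammer over ℝ. -/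
lemma asc_vander (a b : ℝ) (n : ℕ) :
    Polynomial.eval (a + b) (ascPochhammer ℝ n)
      = ∑ ij ∈ antidiagonal n, (n.choose ij.1 : ℝ) *
          (Polynomial.eval a (ascPochhammer ℝ ij.1) * Polynomial.eval b (ascPochhammer ℝ ij.2)) := by
  induction n with
  | zero => simp
  | succ n ih =>
    rw [Finset.sum_antidiagonal_choose_succ_mul
      (fun i j => Polynomial.eval a (ascPochhammer ℝ i) * Polynomial.eval b (ascPochhammer ℝ j)) n,
      ascPochhammer_succ_eval, ih, Finset.sum_mul, ← Finset.sum_add_distrib]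
    refine Finset.sum_congr rfl fun ij hij => ?_
    have hmem : ij.1 + ij.2 = n := Finset.HasAntidiagonal.mem_antidiagonal.mp hij
    have hc : (n.choose ij.2 : ℝ) = (n.choose ij.1 : ℝ) := by
      rw [Nat.choose_symm_of_eq_add hmem.symm]
    have hcast : (ij.1 : ℝ) + (ij.2 : ℝ) = (n : ℝ) := by exact_mod_cast congrArg Nat.cast hmem
    rw [ascPochhammer_succ_eval, ascPochhammer_succ_eval, hc]
    linear_combination (-((n.choose ij.1 : ℝ) *
      (Polynomial.eval a (ascPochhammer ℝ ij.1) * Polynomial.eval b (ascPochhammer ℝ ij.2)))) * hcast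

lemma pc_vander (a b : ℝ) (n : ℕ) :
    ∑ ij ∈ antidiagonal n, pc a ij.1 * pc b ij.2 = pc (a + b) n := by
  rw [pc, asc_vander, Finset.sum_div]
  refine Finset.sum_congr rfl fun ij hij => ?_
  have hmem : ij.1 + ij.2 = n := Finset.HasAntidiagonal.mem_antidiagonal.mp hij
  have hfact : (n.choose ij.1 : ℝ) * (ij.1.factorial : ℝ) * (ij.2.factorial : ℝ)
      = (n.factorial : ℝ) := by
    have h := Nat.choose_mul_factorial_mul_factorial (le_of_add_le_left hmem.le)
    rw [← hmem]
    have h2 : ij.1 + ij.2 - ij.1 = ij.2 := by omega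
    rw [← hmem] at h
    rw [h2] at h
    exact_mod_cast congrArg Nat.cast h
  have h1 : (ij.1.factorial : ℝ) ≠ 0 := by exact_mod_cast ij.1.factorial_pos.ne'
  have h2 : (ij.2.factorial : ℝ) ≠ 0 := by exact_mod_cast ij.2.factorial_pos.ne'
  have hn : (n.factorial : ℝ) ≠ 0 := by exact_mod_cast n.factorial_pos.ne'
  rw [pc, pc]
  field_simp
  linear_combination (-(Polynomial.eval a (ascPochhammer ℝ ij.1) *
    Polynomial.eval b (ascPochhammer ℝ ij.2))) * hfact

lemma E_mul {z : ℝ} (hz0 : 0 ≤ z) (hz1 : z < 1) (a b : ℝ) (ha : |a| ≤ 1) (hb : |b| ≤ 1) :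
    (∑' n, pc a n * z ^ n) * (∑' n, pc b n * z ^ n) = ∑' n, pc (a + b) n * z ^ n := by
  have hsa : Summable fun n => ‖pc a n * z ^ n‖ := by
    have := summable_aux hz0 hz1 (pc_abs_le ha)
    exact this.abs
  have hsb : Summable fun n => ‖pc b n * z ^ n‖ := by
    have := summable_aux hz0 hz1 (pc_abs_le hb)
    exact this.abs
  rw [tsum_mul_tsum_eq_tsum_sum_antidiagonal_of_summable_norm hsa hsb]
  refine tsum_congr fun n => ?_
  have : ∀ ij ∈ antidiagonal n,
      (pc a ij.1 * z ^ ij.1) * (pc b ij.2 * z ^ ij.2) = (pc a ij.1 * pc b ij.2) * z ^ n := by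
    intro ij hij
    have hmem : ij.1 + ij.2 = n := Finset.HasAntidiagonal.mem_antidiagonal.mp hij
    rw [← hmem, pow_add]; ring
  rw [Finset.sum_congr rfl this, ← Finset.sum_mul, pc_vander]

lemma asc_neg_one (m : ℕ) : Polynomial.eval (-1 : ℝ) (ascPochhammer ℝ (m + 2)) = 0 := by
  induction m with
  | zero =>
    rw [ascPochhammer_succ_eval]
    norm_num
  | succ m ih =>
    rw [ascPochhammer_succ_eval, ih, zero_mul]

lemma E_neg_one {z : ℝ} : (∑' n, pc (-1) n * z ^ n) = 1 - z := by
  rw [tsum_eq_sum (s := Finset.range 2) ?_]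
  · rw [Finset.sum_range_succ, Finset.sum_range_one]
    simp [pc, ascPochhammer_one]
    ring
  · intro n hn
    have h2 : 2 ≤ n := by simp at hn; omega
    obtain ⟨m, rfl⟩ : ∃ m, n = m + 2 := ⟨n - 2, by omega⟩
    rw [pc, asc_neg_one, zero_div, zero_mul]

lemma g_eq {z : ℝ} (hz0 : 0 ≤ z) (hz1 : z < 1) :
    (∑' n, pc (-1/3) n * z ^ n) = (1 - z) ^ ((1 : ℝ) / 3) := by
  set g := ∑' n, pc (-1/3) n * z ^ n with hg
  have h13 : |(-1/3 : ℝ)| ≤ 1 := by rw [abs_of_nonpos (by norm_num)]; norm_num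
  have h23 : |(-2/3 : ℝ)| ≤ 1 := by rw [abs_of_nonpos (by norm_num)]; norm_num
  have h2 : g * g = ∑' n, pc (-2/3) n * z ^ n := by
    rw [hg, E_mul hz0 hz1 _ _ h13 h13]
    norm_num
  have h3 : g * g * g = 1 - z := by
    rw [h2, hg, E_mul hz0 hz1 _ _ h23 h13, show (-2/3 : ℝ) + (-1/3) = -1 by norm_num, E_neg_one]
  have hgpos : 0 < g := by
    by_contra hgle
    push_neg at hgle
    have : g * g * g ≤ 0 := mul_nonpos_of_nonneg_of_nonpos (mul_self_nonneg g) hgle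
    linarith
  have h3' : g ^ (3 : ℕ) = 1 - z := by linear_combination h3
  rw [← h3', ← Real.rpow_natCast g 3, ← Real.rpow_mul hgpos.le]
  norm_num

lemma cB_pos (n : ℕ) : 0 < cB n := by
  rw [cB]
  have h1 := ascPochhammer_pos n (2/3 : ℝ) (by norm_num)
  have h2 := ascPochhammer_pos n (1/3 : ℝ) (by norm_num)
  have h3 := ascPochhammer_pos n (4/3 : ℝ) (by norm_num)
  have h4 : (0:ℝ) < n.factorial := by exact_mod_cast n.factorial_pos
  positivity

lemma cA_pos (n : ℕ) : 0 < cA n := by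
  rw [cA]
  have h1 := ascPochhammer_pos n (5/3 : ℝ) (by norm_num)
  have h2 := ascPochhammer_pos n (1/3 : ℝ) (by norm_num)
  have h3 := ascPochhammer_pos n (7/3 : ℝ) (by norm_num)
  have h4 : (0:ℝ) < n.factorial := by exact_mod_cast n.factorial_pos
  positivity

lemma cA_le_one (n : ℕ) : cA n ≤ 1 := by
  rw [cA, div_le_one]
  · have h5 := asc_mono (show (0:ℝ) < 5/3 by norm_num) (show (5/3:ℝ) ≤ 7/3 by norm_num) n
    have h13 : Polynomial.eval (1/3 : ℝ) (ascPochhammer ℝ n) ≤ (n.factorial : ℝ) := by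
      have := asc_abs_le (show |(1/3 : ℝ)| ≤ 1 by rw [abs_of_nonneg]; norm_num; norm_num) n
      exact (le_abs_self _).trans this
    have hp1 := ascPochhammer_pos n (5/3 : ℝ) (by norm_num)
    have hp2 := ascPochhammer_pos n (1/3 : ℝ) (by norm_num)
    nlinarith
  · have h3 := ascPochhammer_pos n (7/3 : ℝ) (by norm_num)
    have h4 : (0:ℝ) < n.factorial := by exact_mod_cast n.factorial_pos
    positivity

lemma cB_le_one (n : ℕ) : cB n ≤ 1 := by
  rw [cB, div_le_one]
  · have h5 := asc_mono (show (0:ℝ) < 2/3 by norm_num) (show (2/3:ℝ) ≤ 4/3 by norm_num) n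
    have h13 : Polynomial.eval (1/3 : ℝ) (ascPochhammer ℝ n) ≤ (n.factorial : ℝ) := by
      have := asc_abs_le (show |(1/3 : ℝ)| ≤ 1 by rw [abs_of_nonneg]; norm_num; norm_num) n
      exact (le_abs_self _).trans this
    have hp1 := ascPochhammer_pos n (2/3 : ℝ) (by norm_num)
    have hp2 := ascPochhammer_pos n (1/3 : ℝ) (by norm_num)
    nlinarith
  · have h3 := ascPochhammer_pos n (4/3 : ℝ) (by norm_num)
    have h4 : (0:ℝ) < n.factorial := by exact_mod_cast n.factorial_pos
    positivity

/-- The key contiguous-relation identity per term. -/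
lemma term_zero (m : ℕ) :
    cA m - (2/3) * cB (m+1) - (2/3) * cB m + (2/3) * pc (-1/3) (m+1) = 0 := by
  have hP := ascPochhammer_pos m (2/3 : ℝ) (by norm_num)
  have hQ := ascPochhammer_pos m (1/3 : ℝ) (by norm_num)
  have hR := ascPochhammer_pos m (4/3 : ℝ) (by norm_num)
  have hF : (0:ℝ) < m.factorial := by exact_mod_cast m.factorial_pos
  set P := Polynomial.eval (2/3 : ℝ) (ascPochhammer ℝ m) with hPdef
  set Q := Polynomial.eval (1/3 : ℝ) (ascPochhammer ℝ m) with hQdef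
  set R := Polynomial.eval (4/3 : ℝ) (ascPochhammer ℝ m) with hRdef
  -- shift relations
  have e5 : Polynomial.eval (5/3 : ℝ) (ascPochhammer ℝ m) = 3/2 * (P * (2/3 + m)) := by
    have h := asc_shift (2/3 : ℝ) m
    norm_num at h
    linarith
  have e7 : Polynomial.eval (7/3 : ℝ) (ascPochhammer ℝ m) = 3/4 * (R * (4/3 + m)) := by
    have h := asc_shift (4/3 : ℝ) m
    norm_num at h
    linarith
  have hQR : Q * (1/3 + m) = (1/3) * R := by
    have h1 := asc_left (1/3 : ℝ) m
    have h2 := ascPochhammer_succ_eval m (1/3 : ℝ)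
    rw [h1] at h2
    norm_num at h2
    linarith
  have ecm : Polynomial.eval (-1/3 : ℝ) (ascPochhammer ℝ (m+1)) = -(1/3) * P := by
    have h := asc_left (-1/3 : ℝ) m
    rw [h, show (-1/3 : ℝ) + 1 = 2/3 by norm_num, ← hPdef]; ring
  rw [cA, cB, cB, pc, e5, e7, ecm,
    ascPochhammer_succ_eval, ascPochhammer_succ_eval, ascPochhammer_succ_eval,
    ← hPdef, ← hQdef, ← hRdef, Nat.factorial_succ]
  have hRQ : R = 3 * (Q * (1/3 + m)) := by linarith
  rw [hRQ]
  have hm0 : (0:ℝ) ≤ (m:ℝ) := Nat.cast_nonneg m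
  have hd1 : (1/3 : ℝ) + m ≠ 0 := by positivity
  have hd2 : (4/3 : ℝ) + m ≠ 0 := by positivity
  have hd3 : ((m:ℝ) + 1) ≠ 0 := by positivity
  have hQ0 : Q ≠ 0 := hQ.ne'
  have hF0 : (m.factorial : ℝ) ≠ 0 := hF.ne'
  push_cast
  field_simp
  ring

theorem stmt15 (l : ℝ) (h1 : 1 < l) :
    hypF (5 / 3) (1 / 3) (7 / 3) (1 / l)
      - (2 / 3) * (l + 1) * hypF (2 / 3) (1 / 3) (4 / 3) (1 / l)
      = -(2 / 3) * l ^ ((2 : ℝ) / 3) * (l - 1) ^ ((1 : ℝ) / 3) := by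
  have hl0 : (0:ℝ) < l := lt_trans one_pos h1
  set z : ℝ := 1 / l with hzdef
  have hz0 : 0 < z := by positivity
  have hz1 : z < 1 := by rw [hzdef, div_lt_one hl0]; exact h1
  set SA := hypF (5 / 3) (1 / 3) (7 / 3) z with hSA
  set SB := hypF (2 / 3) (1 / 3) (4 / 3) z with hSB
  set G := ∑' n, pc (-1/3) n * z ^ n with hGdef
  -- summabilities
  have bA : ∀ n, |cA n| ≤ 1 := fun n => by
    rw [abs_of_pos (cA_pos n)]; exact cA_le_one n
  have bB : ∀ n, |cB n| ≤ 1 := fun n => by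
    rw [abs_of_pos (cB_pos n)]; exact cB_le_one n
  have h13 : |(-1/3 : ℝ)| ≤ 1 := by rw [abs_of_nonpos (by norm_num)]; norm_num
  have sA : Summable (fun n => cA n * z ^ n) := summable_aux hz0.le hz1 bA
  have sB : Summable (fun n => cB n * z ^ n) := summable_aux hz0.le hz1 bB
  have sG : Summable (fun n => pc (-1/3) n * z ^ n) := summable_aux hz0.le hz1 (pc_abs_le h13)
  have HA : HasSum (fun n => cA n * z ^ n) SA := by
    rw [hSA]
    exact sA.hasSum
  have HB : HasSum (fun n => cB n * z ^ n) SB := by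
    rw [hSB]
    exact sB.hasSum
  have HG : HasSum (fun n => pc (-1/3) n * z ^ n) G := sG.hasSum
  -- shifted sums
  set fA : ℕ → ℝ := fun n => if n = 0 then 0 else cA (n-1) * z ^ n with hfAdef
  set fB : ℕ → ℝ := fun n => if n = 0 then 0 else cB (n-1) * z ^ n with hfBdef
  have HfA : HasSum fA (z * SA) := by
    have h2 : HasSum (fun n => fA (n+1)) (z * SA) := by
      have h := HA.mul_left z
      convert h using 1
      · rfl
      funext n
      simp only [hfAdef, Nat.add_sub_cancel, if_neg (Nat.succ_ne_zero n)]
      ring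
    have h3 := (hasSum_nat_add_iff (f := fA) 1).mp h2
    simpa [hfAdef] using h3
  have HfB : HasSum fB (z * SB) := by
    have h2 : HasSum (fun n => fB (n+1)) (z * SB) := by
      have h := HB.mul_left z
      convert h using 1
      · rfl
      funext n
      simp only [hfBdef, Nat.add_sub_cancel, if_neg (Nat.succ_ne_zero n)]
      ring
    have h3 := (hasSum_nat_add_iff (f := fB) 1).mp h2
    simpa [hfBdef] using h3
  -- combine
  have Hcomb := ((HfA.sub (HB.mul_left (2/3))).sub (HfB.mul_left (2/3))).add (HG.mul_left (2/3))
  have Hzero : (fun n => fA n - (2/3) * (cB n * z ^ n) - (2/3) * fB n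
      + (2/3) * (pc (-1/3) n * z ^ n)) = fun _ => (0:ℝ) := by
    funext n
    cases n with
    | zero =>
      have hA0 : fA 0 = 0 := by simp [hfAdef]
      have hB0 : fB 0 = 0 := by simp [hfBdef]
      rw [hA0, hB0]
      norm_num [cB, pc]
    | succ m =>
      simp only [hfAdef, hfBdef, Nat.add_sub_cancel, if_neg (Nat.succ_ne_zero m)]
      have := term_zero m
      linear_combination z ^ (m+1) * this
  rw [Hzero] at Hcomb
  have main : z * SA - 2/3 * SB - 2/3 * (z * SB) + 2/3 * G = 0 := (hasSum_zero.unique Hcomb).symm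
  have hG : G = (1 - z) ^ ((1:ℝ)/3) := g_eq hz0.le hz1
  -- convert to the λ form
  have hlz : l * z = 1 := by rw [hzdef]; field_simp
  have key : SA - 2/3 * (l + 1) * SB = -(2/3) * (l * G) := by
    linear_combination l * main - (SA - 2/3 * SB) * hlz
  rw [hG] at key
  have h1z : 1 - z = (l - 1) / l := by
    rw [hzdef]; field_simp
  rw [h1z, Real.div_rpow (by linarith) hl0.le] at key
  have hll : l ^ ((2:ℝ)/3) * l ^ ((1:ℝ)/3) = l := by
    rw [← Real.rpow_add hl0]
    norm_num
  have hl13 : (0:ℝ) < l ^ ((1:ℝ)/3) := Real.rpow_pos_of_pos hl0 _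
  have hfinal : l * ((l-1) ^ ((1:ℝ)/3) / l ^ ((1:ℝ)/3))
      = l ^ ((2:ℝ)/3) * (l-1) ^ ((1:ℝ)/3) := by
    field_simp
    linear_combination (-((l-1) ^ ((1:ℝ)/3))) * hll
  rw [hfinal] at key
  calc hypF (5 / 3) (1 / 3) (7 / 3) (1 / l)
      - (2 / 3) * (l + 1) * hypF (2 / 3) (1 / 3) (4 / 3) (1 / l)
      = SA - 2/3 * (l + 1) * SB := by rw [hSA, hSB, hzdef]
    _ = -(2/3) * l ^ ((2:ℝ)/3) * (l-1) ^ ((1:ℝ)/3) := by rw [key]; ring
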